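/- Let (λ_m)_{m≥1} be a nonincreasing summable sequence of nonnegative reals with ∑_{m=1}^∞ λ_m = 1 and with finite entropy, i.e. the series H(λ) := ∑_{m=1}^∞ (−λ_m log λ_m) converges. For each d ≥ 1 let c^{(d)} and r^{(d)} be the two marginal sequences of the product-coarse-graining at scale d. Then H(c^{(d)}) + H(r^{(d)}) tends to H(λ) as d → ∞, where H(c^{(d)}) := ∑_{k=1}^d (−c^{(d)}_k log c^{(d)}_k) and H(r^{(d)}) := ∑_{i=0}^∞ (−r^{(d)}_i log r^{(d)}_i). -/

import Mathlib

open Real Filter Topology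

/-- Affine maps `j ↦ j*d + c` are injective for `d > 0`. -/
lemma aff_inj (d c : ℕ) (hd : 0 < d) : Function.Injective fun j : ℕ => j * d + c := by
  intro a b h
  simp only [] at h
  have h' : a * d = b * d := by omega
  exact Nat.eq_of_mul_eq_mul_right hd h'

/-- Decomposition of a `tsum` over `ℕ` by residues mod `d`. -/
lemma tsum_mod (h : ℕ → ℝ) (hs : Summable h) (d : ℕ) (hd : 0 < d) :
    ∑' n, h n = ∑ k ∈ Finset.range d, ∑' j, h (j * d + k) := by
  haveI : NeZero d := ⟨hd.ne'⟩
  set e : ℕ × Fin d ≃ ℕ := (Nat.divModEquiv d).symm with he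
  have heq : ∀ p : ℕ × Fin d, e p = p.1 * d + (p.2 : ℕ) := fun p => rfl
  have hF : Summable fun p : ℕ × Fin d => h (e p) := e.summable_iff.mpr hs
  have hswap : Summable fun q : Fin d × ℕ => h (e (Equiv.prodComm (Fin d) ℕ q)) :=
    (Equiv.prodComm (Fin d) ℕ).summable_iff.mpr hF
  calc ∑' n, h n
      = ∑' p : ℕ × Fin d, h (e p) := (e.tsum_eq h).symm
    _ = ∑' q : Fin d × ℕ, h (e (Equiv.prodComm (Fin d) ℕ q)) :=
        ((Equiv.prodComm (Fin d) ℕ).tsum_eq _).symm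
    _ = ∑' (k : Fin d), ∑' j, h (j * d + (k : ℕ)) := by
        refine Summable.tsum_prod' hswap fun k => ?_
        exact hs.comp_injective (aff_inj d k hd)
    _ = ∑ k : Fin d, ∑' j, h (j * d + (k : ℕ)) := tsum_fintype _
    _ = ∑ k ∈ Finset.range d, ∑' j, h (j * d + k) :=
        Fin.sum_univ_eq_sum_range (fun k => ∑' j, h (j * d + k)) d

/-- Subadditivity of `negMulLog` on nonnegative reals. -/
lemma negMulLog_add_le {a e : ℝ} (ha : 0 ≤ a) (he : 0 ≤ e) :
    Real.negMulLog (a + e) ≤ Real.negMulLog a + Real.negMulLog e := by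
  have key : ∀ x : ℝ, 0 ≤ x → x ≤ a + e → x * Real.log x ≤ x * Real.log (a + e) := by
    intro x hx hxy
    rcases hx.eq_or_lt with h | h
    · simp [← h]
    · exact mul_le_mul_of_nonneg_left (Real.log_le_log h hxy) hx
  have h1 := key a ha (by linarith)
  have h2 := key e he (by linarith)
  have h3 : (a + e) * Real.log (a + e) = a * Real.log (a + e) + e * Real.log (a + e) := by ring
  simp only [Real.negMulLog, neg_mul]
  linarith

/-- Lower bound: `negMulLog` decreases by at most `e` when the argument grows by `e` within `[0,1]`. -/
lemma negMulLog_add_ge {a e : ℝ} (ha : 0 ≤ a) (he : 0 ≤ e) (h1 : a + e ≤ 1) :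
    Real.negMulLog a - e ≤ Real.negMulLog (a + e) := by
  rcases ha.eq_or_lt with h | h
  · subst h
    have h2 : 0 ≤ Real.negMulLog (0 + e) := Real.negMulLog_nonneg (by linarith) h1
    simp only [Real.negMulLog_zero]
    linarith
  · have hae : 0 < a + e := by linarith
    have hlog1 : Real.log ((a + e) / a) ≤ (a + e) / a - 1 :=
      Real.log_le_sub_one_of_pos (by positivity)
    have hdiv : Real.log ((a + e) / a) = Real.log (a + e) - Real.log a :=
      Real.log_div hae.ne' h.ne'
    have hfrac : (a + e) / a - 1 = e / a := by field_simp; ring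
    have hlog2 : Real.log (a + e) ≤ Real.log a + e / a := by
      rw [hdiv, hfrac] at hlog1; linarith
    have hlogneg : Real.log (a + e) ≤ 0 := Real.log_nonpos hae.le h1
    have hea : a * (e / a) = e := by field_simp
    simp only [Real.negMulLog, neg_mul]
    have hmul : a * Real.log (a + e) ≤ a * (Real.log a + e / a) :=
      mul_le_mul_of_nonneg_left hlog2 ha
    nlinarith [mul_nonneg he (neg_nonneg.mpr hlogneg)]

/-- If all terms of a nonneg summable sequence are bounded by the first, which is `≤ 1`, then
`negMulLog` of the sum is at most the sum of `negMulLog`s. -/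
lemma negMulLog_tsum_le (g : ℕ → ℝ) (hg : ∀ j, 0 ≤ g j) (hmax : ∀ j, g j ≤ g 0)
    (h01 : g 0 ≤ 1) (hs : Summable g) (hfs : Summable fun j => Real.negMulLog (g j)) :
    Real.negMulLog (∑' j, g j) ≤ ∑' j, Real.negMulLog (g j) := by
  have hfnn : ∀ j, 0 ≤ Real.negMulLog (g j) :=
    fun j => Real.negMulLog_nonneg (hg j) ((hmax j).trans h01)
  have hs0 : 0 ≤ ∑' j, g j := tsum_nonneg hg
  by_cases hz : ∑' j, g j = 0
  · rw [hz, Real.negMulLog_zero]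
    exact tsum_nonneg hfnn
  · have hspos : 0 < ∑' j, g j := hs0.lt_of_ne (Ne.symm hz)
    have hg0 : 0 < g 0 := by
      by_contra hcon
      push_neg at hcon
      have h00 : g 0 = 0 := le_antisymm hcon (hg 0)
      have hall : ∀ j, g j = 0 := fun j => le_antisymm (h00 ▸ hmax j) (hg j)
      exact hz (by rw [tsum_congr hall, tsum_zero])
    have hle : g 0 ≤ ∑' j, g j := Summable.le_tsum hs 0 fun j _ => hg j
    have step1 : Real.negMulLog (∑' j, g j) ≤ (∑' j, g j) * (-Real.log (g 0)) := by
      have : -Real.log (∑' j, g j) ≤ -Real.log (g 0) :=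
        neg_le_neg (Real.log_le_log hg0 hle)
      calc Real.negMulLog (∑' j, g j) = (∑' j, g j) * (-Real.log (∑' j, g j)) := by
            simp [Real.negMulLog]
        _ ≤ (∑' j, g j) * (-Real.log (g 0)) := mul_le_mul_of_nonneg_left this hs0
    have step2 : (∑' j, g j) * (-Real.log (g 0)) = ∑' j, g j * (-Real.log (g 0)) :=
      tsum_mul_right.symm
    have step3 : ∑' j, g j * (-Real.log (g 0)) ≤ ∑' j, Real.negMulLog (g j) := by
      refine Summable.tsum_le_tsum (fun j => ?_) (hs.mul_right _) hfs
      rcases (hg j).eq_or_lt with h | h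
      · simp [← h]
      · have hlog : Real.log (g j) ≤ Real.log (g 0) := Real.log_le_log h (hmax j)
        have : g j * (-Real.log (g 0)) ≤ g j * (-Real.log (g j)) :=
          mul_le_mul_of_nonneg_left (by linarith) h.le
        calc g j * (-Real.log (g 0)) ≤ g j * (-Real.log (g j)) := this
          _ = Real.negMulLog (g j) := by simp [Real.negMulLog]
    linarith [step1, step2 ▸ step3]

/-- Finite-sum version of `negMulLog_tsum_le`. -/
lemma negMulLog_sum_le (g : ℕ → ℝ) (d : ℕ) (hd : 0 < d) (hg : ∀ j, 0 ≤ g j)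
    (hmax : ∀ j, g j ≤ g 0) (h01 : g 0 ≤ 1) :
    Real.negMulLog (∑ l ∈ Finset.range d, g l) ≤ ∑ l ∈ Finset.range d, Real.negMulLog (g l) := by
  set G : ℕ → ℝ := fun j => if j < d then g j else 0 with hG
  have hGz : ∀ b ∉ Finset.range d, G b = 0 := by
    intro b hb
    simp only [hG, Finset.mem_range, not_lt] at hb ⊢
    rw [if_neg (by omega)]
  have hGfz : ∀ b ∉ Finset.range d, Real.negMulLog (G b) = 0 := by
    intro b hb; rw [hGz b hb, Real.negMulLog_zero]
  have hGeq : ∀ b ∈ Finset.range d, G b = g b := by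
    intro b hb
    simp only [hG, Finset.mem_range] at hb ⊢
    rw [if_pos hb]
  have hG0 : G 0 = g 0 := by simp [hG, hd]
  have h1 : ∑' j, G j = ∑ l ∈ Finset.range d, g l := by
    rw [tsum_eq_sum hGz]; exact Finset.sum_congr rfl hGeq
  have h2 : ∑' j, Real.negMulLog (G j) = ∑ l ∈ Finset.range d, Real.negMulLog (g l) := by
    rw [tsum_eq_sum hGfz]
    exact Finset.sum_congr rfl fun b hb => by rw [hGeq b hb]
  have hGnn : ∀ j, 0 ≤ G j := by
    intro j
    by_cases h : j < d
    · rw [hGeq j (Finset.mem_range.mpr h)]; exact hg j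
    · rw [hGz j (by simpa using h)]
  have hGmax : ∀ j, G j ≤ G 0 := by
    intro j
    rw [hG0]
    by_cases h : j < d
    · rw [hGeq j (Finset.mem_range.mpr h)]; exact hmax j
    · rw [hGz j (by simpa using h)]; exact hg 0
  have := negMulLog_tsum_le G hGnn hGmax (hG0 ▸ h01)
    (summable_of_ne_finset_zero hGz)
    (summable_of_ne_finset_zero hGfz)
  rw [h1, h2] at this
  exact this

/-- Column marginal `c^{(d)}_k = ∑_{j=0}^∞ λ_{j·d+k}` (0-indexed: `k < d`). -/
noncomputable def cMarginal (lam : ℕ → ℝ) (d k : ℕ) : ℝ := ∑' j : ℕ, lam (j * d + k)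

/-- Row marginal `r^{(d)}_i = ∑_{l=1}^d λ_{i·d+l}` (0-indexed in `l`). -/
noncomputable def rMarginal (lam : ℕ → ℝ) (d i : ℕ) : ℝ := ∑ l ∈ Finset.range d, lam (i * d + l)

set_option maxHeartbeats 1000000 in
/-- `H(c^{(d)}) + H(r^{(d)}) → H(λ)` as `d → ∞`, where `H` is the Shannon entropy
`∑ -p log p` (with `0 log 0 = 0`, as encoded by `Real.negMulLog`). -/
theorem stmt4 (lam : ℕ → ℝ) (hanti : Antitone lam) (hnn : ∀ n, 0 ≤ lam n)
    (hsum : Summable lam) (h1 : ∑' n, lam n = 1)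
    (hent : Summable fun n => Real.negMulLog (lam n)) :
    Filter.Tendsto
      (fun d : ℕ => (∑ k ∈ Finset.range d, Real.negMulLog (cMarginal lam d k)) +
        ∑' i : ℕ, Real.negMulLog (rMarginal lam d i))
      Filter.atTop (nhds (∑' n, Real.negMulLog (lam n))) := by
  classical
  have hlam1 : ∀ n, lam n ≤ 1 := by
    intro n
    have h := Summable.le_tsum hsum n fun j _ => hnn j
    rwa [h1] at h
  have hfnn : ∀ n, 0 ≤ Real.negMulLog (lam n) :=
    fun n => Real.negMulLog_nonneg (hnn n) (hlam1 n)
  set E := ∑' n, Real.negMulLog (lam n) with hE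
  set P : ℕ → ℝ := fun d => ∑ k ∈ Finset.range d, Real.negMulLog (lam k) with hPdef
  set T : ℕ → ℝ := fun d => ∑' m, lam (m + d) with hTdef
  set ET : ℕ → ℝ := fun d => ∑' m, Real.negMulLog (lam (m + d)) with hETdef
  set Q : ℕ → ℝ := fun d => Real.negMulLog (∑ l ∈ Finset.range d, lam l) with hQdef
  have hPlim : Tendsto P atTop (𝓝 E) := hent.hasSum.tendsto_sum_nat
  have hTlim : Tendsto T atTop (𝓝 0) := tendsto_sum_nat_add lam
  have hETlim : Tendsto ET atTop (𝓝 0) := tendsto_sum_nat_add fun n => Real.negMulLog (lam n)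
  have hQlim : Tendsto Q atTop (𝓝 0) := by
    have h2 : Tendsto (fun d => ∑ l ∈ Finset.range d, lam l) atTop (𝓝 1) := by
      have := hsum.hasSum.tendsto_sum_nat
      rwa [h1] at this
    have h3 := (Real.continuous_negMulLog.tendsto 1).comp h2
    simpa [hQdef, Function.comp_def] using h3
  have habs : Tendsto (fun d => |P d - E|) atTop (𝓝 0) := by
    have := (hPlim.sub_const E).abs
    simpa using this
  set G : ℕ → ℝ := fun d => |P d - E| + 2 * ET d + Q d + T d with hGdef
  have hGlim : Tendsto G atTop (𝓝 0) := by
    have := ((habs.add (hETlim.const_mul 2)).add hQlim).add hTlim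
    simpa [hGdef] using this
  -- the main eventual bounds
  have hbound : ∀ᶠ d in atTop,
      -G d ≤ ((∑ k ∈ Finset.range d, Real.negMulLog (cMarginal lam d k)) +
        ∑' i : ℕ, Real.negMulLog (rMarginal lam d i)) - E ∧
      ((∑ k ∈ Finset.range d, Real.negMulLog (cMarginal lam d k)) +
        ∑' i : ℕ, Real.negMulLog (rMarginal lam d i)) - E ≤ G d := by
    filter_upwards [eventually_ge_atTop 1] with d hd
    have hd0 : 0 < d := hd
    -- summability helpers
    have hsub : ∀ c, Summable fun j => lam (j * d + c) :=
      fun c => hsum.comp_injective (aff_inj d c hd0)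
    have hsubf : ∀ c, Summable fun j => Real.negMulLog (lam (j * d + c)) :=
      fun c => hent.comp_injective (aff_inj d c hd0)
    have hidx : ∀ (i c : ℕ), i * d + c + d = (i + 1) * d + c := fun i c => by ring
    have hsub2 : ∀ c, Summable fun j => lam (j * d + c + d) :=
      fun c => (hsub (c + d)).congr fun j => by rw [add_assoc]
    have hsubf2 : ∀ c, Summable fun j => Real.negMulLog (lam (j * d + c + d)) :=
      fun c => (hsubf (c + d)).congr fun j => by rw [add_assoc]
    have hshift : Summable fun m => lam (m + d) := (summable_nat_add_iff d).mpr hsum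
    have hshiftf : Summable fun m => Real.negMulLog (lam (m + d)) :=
      (summable_nat_add_iff (f := fun n => Real.negMulLog (lam n)) d).mpr hent
    have hTnn : 0 ≤ T d := tsum_nonneg fun m => hnn _
    have hETnn : 0 ≤ ET d := tsum_nonneg fun m => hfnn _
    have hETeq : ET d = ∑ k ∈ Finset.range d, ∑' j, Real.negMulLog (lam (j * d + k + d)) :=
      tsum_mod _ hshiftf d hd0
    -- column marginal decomposition
    set ε : ℕ → ℝ := fun k => ∑' j, lam (j * d + k + d) with hεdef
    have hεnn : ∀ k, 0 ≤ ε k := fun k => tsum_nonneg fun j => hnn _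
    have hc : ∀ k, cMarginal lam d k = lam k + ε k := by
      intro k
      rw [cMarginal, Summable.tsum_eq_zero_add (hsub k)]
      congr 1
      · norm_num
      · exact tsum_congr fun j => by rw [hidx]
    have hεsum : ∑ k ∈ Finset.range d, ε k = T d :=
      (tsum_mod (fun m => lam (m + d)) hshift d hd0).symm
    have hc1 : ∀ k, cMarginal lam d k ≤ 1 := by
      intro k
      rw [← h1, cMarginal]
      exact Summable.tsum_le_tsum_of_inj _ (aff_inj d k hd0) (fun c _ => hnn c)
        (fun j => le_rfl) (hsub k) hsum
    have hεf : ∀ k, Real.negMulLog (ε k) ≤ ∑' j, Real.negMulLog (lam (j * d + k + d)) := by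
      intro k
      refine negMulLog_tsum_le (fun j => lam (j * d + k + d)) (fun j => hnn _)
        (fun j => hanti ?_) (hlam1 _) (hsub2 k) (hsubf2 k)
      exact add_le_add_left (add_le_add_left (Nat.mul_le_mul_right d (Nat.zero_le j)) k) d
    -- column entropy bounds
    have hSub : ∑ k ∈ Finset.range d, Real.negMulLog (cMarginal lam d k) ≤ P d + ET d := by
      calc ∑ k ∈ Finset.range d, Real.negMulLog (cMarginal lam d k)
          ≤ ∑ k ∈ Finset.range d, (Real.negMulLog (lam k) + Real.negMulLog (ε k)) := by
            refine Finset.sum_le_sum fun k _ => ?_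
            rw [hc k]
            exact negMulLog_add_le (hnn k) (hεnn k)
        _ = P d + ∑ k ∈ Finset.range d, Real.negMulLog (ε k) := Finset.sum_add_distrib
        _ ≤ P d + ET d := by
            refine add_le_add_right ?_ _
            rw [hETeq]
            exact Finset.sum_le_sum fun k _ => hεf k
    have hSlb : P d - T d ≤ ∑ k ∈ Finset.range d, Real.negMulLog (cMarginal lam d k) := by
      have step : ∀ k ∈ Finset.range d,
          Real.negMulLog (lam k) - ε k ≤ Real.negMulLog (cMarginal lam d k) := by
        intro k _
        rw [hc k]
        exact negMulLog_add_ge (hnn k) (hεnn k) (by rw [← hc k]; exact hc1 k)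
      calc P d - T d = ∑ k ∈ Finset.range d, (Real.negMulLog (lam k) - ε k) := by
            rw [Finset.sum_sub_distrib, hεsum]
        _ ≤ ∑ k ∈ Finset.range d, Real.negMulLog (cMarginal lam d k) :=
            Finset.sum_le_sum step
    -- row marginal bounds
    have hrnn : ∀ i, 0 ≤ rMarginal lam d i :=
      fun i => Finset.sum_nonneg fun l _ => hnn _
    have hsubr : ∀ i, Summable fun l => lam (i * d + l) :=
      fun i => hsum.comp_injective (add_right_injective (i * d))
    have hr1 : ∀ i, rMarginal lam d i ≤ 1 := by
      intro i
      rw [rMarginal, ← h1]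
      calc ∑ l ∈ Finset.range d, lam (i * d + l) ≤ ∑' l, lam (i * d + l) :=
            Summable.sum_le_tsum _ (fun l _ => hnn _) (hsubr i)
        _ ≤ ∑' n, lam n :=
            Summable.tsum_le_tsum_of_inj _ (add_right_injective (i * d)) (fun c _ => hnn c)
              (fun l => le_rfl) (hsubr i) hsum
    have hfrnn : ∀ i, 0 ≤ Real.negMulLog (rMarginal lam d i) :=
      fun i => Real.negMulLog_nonneg (hrnn i) (hr1 i)
    have hfr_le : ∀ i, Real.negMulLog (rMarginal lam d (i + 1)) ≤
        ∑ l ∈ Finset.range d, Real.negMulLog (lam ((i + 1) * d + l)) := by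
      intro i
      refine negMulLog_sum_le (fun l => lam ((i + 1) * d + l)) d hd0 (fun l => hnn _)
        (fun l => hanti (add_le_add_right (Nat.zero_le l) _)) (hlam1 _)
    have hBsumm : Summable fun i => ∑ l ∈ Finset.range d,
        Real.negMulLog (lam ((i + 1) * d + l)) := by
      refine summable_sum fun l _ => ?_
      exact (hsubf2 l).congr fun i => by rw [hidx]
    have hRs' : Summable fun i => Real.negMulLog (rMarginal lam d (i + 1)) :=
      Summable.of_nonneg_of_le (fun i => hfrnn _) hfr_le hBsumm
    have hRs : Summable fun i => Real.negMulLog (rMarginal lam d i) :=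
      (summable_nat_add_iff 1).mp hRs'
    have hr0eq : rMarginal lam d 0 = ∑ l ∈ Finset.range d, lam l := by
      rw [rMarginal]
      exact Finset.sum_congr rfl fun l _ => by norm_num
    have hRup : ∑' i, Real.negMulLog (rMarginal lam d (i + 1)) ≤ ET d := by
      calc ∑' i, Real.negMulLog (rMarginal lam d (i + 1))
          ≤ ∑' i, ∑ l ∈ Finset.range d, Real.negMulLog (lam ((i + 1) * d + l)) :=
            Summable.tsum_le_tsum hfr_le hRs' hBsumm
        _ = ∑ l ∈ Finset.range d, ∑' i, Real.negMulLog (lam ((i + 1) * d + l)) :=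
            Summable.tsum_finsetSum fun l _ => (hsubf2 l).congr fun i => by rw [hidx]
        _ = ∑ l ∈ Finset.range d, ∑' i, Real.negMulLog (lam (i * d + l + d)) :=
            Finset.sum_congr rfl fun l _ => tsum_congr fun i => by rw [hidx]
        _ = ET d := hETeq.symm
    have hRnn : 0 ≤ ∑' i, Real.negMulLog (rMarginal lam d i) := tsum_nonneg hfrnn
    have hRle : ∑' i, Real.negMulLog (rMarginal lam d i) ≤ Q d + ET d := by
      rw [Summable.tsum_eq_zero_add hRs, hr0eq]
      exact add_le_add_right hRup _
    have hQnn : 0 ≤ Q d := by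
      refine Real.negMulLog_nonneg (Finset.sum_nonneg fun l _ => hnn _) ?_
      rw [← h1]
      exact Summable.sum_le_tsum _ (fun l _ => hnn _) hsum
    have habs1 : P d - E ≤ |P d - E| := le_abs_self _
    have habs2 : -|P d - E| ≤ P d - E := neg_abs_le _
    constructor
    · simp only [hGdef]
      linarith
    · simp only [hGdef]
      linarith
  have key : Tendsto (fun d => ((∑ k ∈ Finset.range d, Real.negMulLog (cMarginal lam d k)) +
      ∑' i : ℕ, Real.negMulLog (rMarginal lam d i)) - E) atTop (𝓝 0) := by
    refine tendsto_of_tendsto_of_tendsto_of_le_of_le' (g := fun d => -G d) (h := G) ?_ hGlim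
      (hbound.mono fun d h => h.1) (hbound.mono fun d h => h.2)
    simpa using hGlim.neg
  have := key.add_const E
  simpa using this
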